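/- arXiv:1307.0830 — 2 statements merged into one kernel-verified Lean document; each statement's English description precedes it below -/
import Mathlib

section
/- Let $X_1, X_2 > 0$ and let $N \subseteq \mathbb{R}^2_{\geq 0}$ be the complement in the positive quadrant of the convex hull of $(3,0)+\mathbb{R}^2_{\geq 0}$, $(1,1)+\mathbb{R}^2_{\geq 0}$, and $(0,3)+\mathbb{R}^2_{\geq 0}$ (the Newton region of the monomial ideal $(x^3, xy, y^3)$). Then $1 - \int_N \frac{2!\, X_1 X_2}{(1+a_1X_1+a_2X_2)^3}\, da_1 da_2 = \frac{3X_2}{(1+3X_1)(1+3X_2)} + \frac{1}{1+3X_2} + \frac{3X_1X_2}{(1+3X_1)(1+X_1+X_2)(1+3X_2)}$. -/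
open MeasureTheory Set

private lemma ftc_pow3' (X Y c b : ℝ) (hc : 1 ≤ c) (hY : 0 < Y) (hb : 0 ≤ b) :
    ∫ y in (0:ℝ)..b, 2 * X * Y / (c + y * Y) ^ 3 = X / c ^ 2 - X / (c + b * Y) ^ 2 := by
  have hpos : ∀ y ∈ Set.uIcc (0:ℝ) b, 0 < c + y * Y := by
    intro y hy
    rw [Set.uIcc_of_le hb] at hy
    nlinarith [hy.1]
  have hderiv : ∀ y ∈ Set.uIcc (0:ℝ) b,
      HasDerivAt (fun y => -X / (c + y * Y) ^ 2) (2 * X * Y / (c + y * Y) ^ 3) y := by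
    intro y hy
    have h0 : c + y * Y ≠ 0 := (hpos y hy).ne'
    have h1 : HasDerivAt (fun y : ℝ => c + y * Y) Y y := by
      simpa using ((hasDerivAt_id y).mul_const Y).const_add c
    have h2 := (h1.pow 2).inv (pow_ne_zero 2 h0)
    have h3 := h2.const_mul (-X)
    convert h3 using 1
    · rfl
    · rfl
    · funext z; simp [div_eq_mul_inv]
    · simp only [Pi.pow_apply, Nat.cast_ofNat, Nat.add_one_sub_one, pow_one]
      field_simp
  have hcont : ContinuousOn (fun y => 2 * X * Y / (c + y * Y) ^ 3) (Set.uIcc (0:ℝ) b) := by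
    apply ContinuousOn.div continuousOn_const
    · fun_prop
    · intro y hy; exact pow_ne_zero 3 (hpos y hy).ne'
  rw [intervalIntegral.integral_eq_sub_of_hasDerivAt hderiv hcont.intervalIntegrable]
  have h0 : c ≠ 0 := by linarith
  have hb0 : c + b * Y ≠ 0 := (hpos b (by rw [Set.uIcc_of_le hb]; exact ⟨hb, le_refl b⟩)).ne'
  field_simp
  ring

private lemma ftc_pow2' (X c d a b : ℝ) (hab : a ≤ b)
    (hpos : ∀ x ∈ Set.Icc a b, 0 < c + x * d) :
    ∫ x in a..b, X / (c + x * d) ^ 2 = X * (b - a) / ((c + a * d) * (c + b * d)) := by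
  have ha0 : c + a * d ≠ 0 := (hpos a ⟨le_refl a, hab⟩).ne'
  have hb0 : c + b * d ≠ 0 := (hpos b ⟨hab, le_refl b⟩).ne'
  by_cases hd : d = 0
  · subst hd
    simp only [mul_zero, add_zero] at *
    rw [intervalIntegral.integral_const, smul_eq_mul]
    field_simp
    try ring
  · have hderiv : ∀ x ∈ Set.uIcc a b,
        HasDerivAt (fun x => -(X / d) / (c + x * d)) (X / (c + x * d) ^ 2) x := by
      intro x hx
      rw [Set.uIcc_of_le hab] at hx
      have h0 : c + x * d ≠ 0 := (hpos x hx).ne'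
      have h1 : HasDerivAt (fun x : ℝ => c + x * d) d x := by
        simpa using ((hasDerivAt_id x).mul_const d).const_add c
      have h2 := (h1.inv h0).const_mul (-(X / d))
      convert h2 using 1
      · rfl
      · rfl
      · funext z; simp [div_eq_mul_inv]
      · field_simp
    have hcont : ContinuousOn (fun x => X / (c + x * d) ^ 2) (Set.uIcc a b) := by
      apply ContinuousOn.div continuousOn_const
      · fun_prop
      · intro x hx
        rw [Set.uIcc_of_le hab] at hx
        exact pow_ne_zero 2 (hpos x hx).ne'
    rw [intervalIntegral.integral_eq_sub_of_hasDerivAt hderiv hcont.intervalIntegrable]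
    rw [div_sub_div _ _ hb0 ha0, div_eq_div_iff (mul_ne_zero hb0 ha0) (mul_ne_zero ha0 hb0)]
    field_simp
    ring

private lemma intInt_pow2' (X c d a b : ℝ) (hab : a ≤ b)
    (hpos : ∀ x ∈ Set.Icc a b, 0 < c + x * d) :
    IntervalIntegrable (fun x => X / (c + x * d) ^ 2) volume a b := by
  apply ContinuousOn.intervalIntegrable
  apply ContinuousOn.div continuousOn_const (by fun_prop)
  intro x hx
  rw [Set.uIcc_of_le hab] at hx
  exact pow_ne_zero 2 (hpos x hx).ne'

private lemma measurableT' (u v a b : ℝ) :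
    MeasurableSet {p : ℝ × ℝ | p.1 ∈ Ico a b ∧ p.2 ∈ Ico 0 (u + v * p.1)} := by
  have : {p : ℝ × ℝ | p.1 ∈ Ico a b ∧ p.2 ∈ Ico 0 (u + v * p.1)}
      = ({p : ℝ × ℝ | a ≤ p.1} ∩ {p | p.1 < b}) ∩
        ({p | 0 ≤ p.2} ∩ {p | p.2 < u + v * p.1}) := by
    ext p; simp [Set.mem_Ico]; try tauto
  rw [this]
  exact ((measurableSet_le measurable_const measurable_fst).inter
    (measurableSet_lt measurable_fst measurable_const)).inter
    ((measurableSet_le measurable_const measurable_snd).inter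
    (measurableSet_lt measurable_snd (by fun_prop)))

private lemma integrableOnT' (X Y u v a b : ℝ) (hX : 0 < X) (hY : 0 < Y) (h0a : 0 ≤ a) :
    IntegrableOn (fun p : ℝ × ℝ => 2 * X * Y / (1 + p.1 * X + p.2 * Y) ^ 3)
      {p : ℝ × ℝ | p.1 ∈ Ico a b ∧ p.2 ∈ Ico 0 (u + v * p.1)} := by
  set f : ℝ × ℝ → ℝ := fun p => 2 * X * Y / (1 + p.1 * X + p.2 * Y) ^ 3 with hf
  set T : Set (ℝ × ℝ) := {p : ℝ × ℝ | p.1 ∈ Ico a b ∧ p.2 ∈ Ico 0 (u + v * p.1)} with hT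
  have hTm : MeasurableSet T := measurableT' u v a b
  have hsub : T ⊆ Icc a b ×ˢ Icc 0 (|u| + |v| * |b|) := by
    rintro ⟨x, y⟩ ⟨hx, hy⟩
    refine ⟨⟨hx.1, hx.2.le⟩, hy.1, hy.2.le.trans ?_⟩
    have hx0 : 0 ≤ x := le_trans h0a hx.1
    have hxb : x ≤ |b| := le_trans hx.2.le (le_abs_self b)
    nlinarith [le_abs_self u, le_abs_self v, neg_abs_le v, abs_nonneg v, abs_nonneg b]
  have hfin : volume T ≠ ⊤ :=
    ((measure_mono hsub).trans_lt (isCompact_Icc.prod isCompact_Icc).measure_lt_top).ne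
  have hmeas_f : AEStronglyMeasurable f volume := by
    apply Measurable.aestronglyMeasurable
    apply Measurable.div measurable_const
    fun_prop
  have hbdd : ∀ᵐ p ∂(volume.restrict T), ‖f p‖ ≤ 2 * X * Y := by
    refine (ae_restrict_iff' hTm).2 (ae_of_all _ ?_)
    rintro ⟨x, y⟩ hp
    obtain ⟨hx, hy⟩ := hp
    have hx0 : 0 ≤ x := le_trans h0a hx.1
    have h1 : (1 : ℝ) ≤ 1 + x * X + y * Y := by nlinarith [hy.1]
    have h1' : (1 : ℝ) ≤ (1 + x * X + y * Y) ^ 3 := one_le_pow₀ h1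
    rw [Real.norm_eq_abs, abs_of_nonneg (by positivity)]
    exact div_le_self (by positivity) h1'
  exact Measure.integrableOn_of_bounded hfin hmeas_f hbdd

private lemma region_integral' (X Y u v a b : ℝ) (hX : 0 < X) (hY : 0 < Y) (hab : a ≤ b)
    (h0a : 0 ≤ a) (hg0 : ∀ x ∈ Ico a b, 0 ≤ u + v * x) :
    ∫ p : ℝ × ℝ in {p | p.1 ∈ Ico a b ∧ p.2 ∈ Ico 0 (u + v * p.1)},
      2 * X * Y / (1 + p.1 * X + p.2 * Y) ^ 3
    = ∫ x in a..b, (X / (1 + x * X) ^ 2 - X / (1 + x * X + (u + v * x) * Y) ^ 2) := by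
  set f : ℝ × ℝ → ℝ := fun p => 2 * X * Y / (1 + p.1 * X + p.2 * Y) ^ 3 with hf
  set T : Set (ℝ × ℝ) := {p | p.1 ∈ Ico a b ∧ p.2 ∈ Ico 0 (u + v * p.1)} with hT
  have hTm : MeasurableSet T := measurableT' u v a b
  have hIntOn : IntegrableOn f T := integrableOnT' X Y u v a b hX hY h0a
  have hInd : Integrable (T.indicator f) := (integrable_indicator_iff hTm).2 hIntOn
  calc ∫ p in T, f p = ∫ p, T.indicator f p := (integral_indicator hTm).symm
    _ = ∫ x, ∫ y, T.indicator f (x, y) := by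
        rw [Measure.volume_eq_prod] at hInd ⊢
        exact integral_prod _ hInd
    _ = ∫ x, (Ico a b).indicator
        (fun x => X / (1 + x * X) ^ 2 - X / (1 + x * X + (u + v * x) * Y) ^ 2) x := by
        refine integral_congr_ae (ae_of_all _ fun x => ?_)
        by_cases hx : x ∈ Ico a b
        · rw [Set.indicator_of_mem hx]
          have hsec : ∀ y, T.indicator f (x, y)
              = (Ico 0 (u + v * x)).indicator (fun y => f (x, y)) y := by
            intro y
            by_cases hy : y ∈ Ico 0 (u + v * x)
            · rw [Set.indicator_of_mem hy, Set.indicator_of_mem (by exact ⟨hx, hy⟩)]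
            · rw [Set.indicator_of_notMem hy,
                Set.indicator_of_notMem (fun h => hy h.2)]
          have hb0 : 0 ≤ u + v * x := hg0 x hx
          calc ∫ y, T.indicator f (x, y)
              = ∫ y, (Ico 0 (u + v * x)).indicator (fun y => f (x, y)) y := by
                simp_rw [hsec]
            _ = ∫ y in Ico 0 (u + v * x), f (x, y) := integral_indicator measurableSet_Ico
            _ = ∫ y in Ioc 0 (u + v * x), f (x, y) := by
                rw [integral_Ico_eq_integral_Ioo, ← integral_Ioc_eq_integral_Ioo]
            _ = ∫ y in (0:ℝ)..(u + v * x), f (x, y) :=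
                (intervalIntegral.integral_of_le hb0).symm
            _ = X / (1 + x * X) ^ 2 - X / (1 + x * X + (u + v * x) * Y) ^ 2 := by
                have hx0 : 0 ≤ x := le_trans h0a hx.1
                exact ftc_pow3' X Y (1 + x * X) (u + v * x) (by nlinarith) hY hb0
        · rw [Set.indicator_of_notMem hx]
          have : ∀ y, T.indicator f (x, y) = 0 :=
            fun y => Set.indicator_of_notMem (fun h => hx h.1) _
          simp_rw [this, integral_zero]
    _ = ∫ x in Ico a b,
        (X / (1 + x * X) ^ 2 - X / (1 + x * X + (u + v * x) * Y) ^ 2) :=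
        integral_indicator measurableSet_Ico
    _ = ∫ x in a..b,
        (X / (1 + x * X) ^ 2 - X / (1 + x * X + (u + v * x) * Y) ^ 2) := by
        rw [integral_Ico_eq_integral_Ioo, ← integral_Ioc_eq_integral_Ioo,
          intervalIntegral.integral_of_le hab]

private lemma hull_eq' :
    convexHull ℝ ({a : Fin 2 → ℝ | 3 ≤ a 0 ∧ 0 ≤ a 1} ∪ {a : Fin 2 → ℝ | 1 ≤ a 0 ∧ 1 ≤ a 1}
        ∪ {a : Fin 2 → ℝ | 0 ≤ a 0 ∧ 3 ≤ a 1})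
    = {a : Fin 2 → ℝ | 0 ≤ a 0 ∧ 0 ≤ a 1 ∧ 3 ≤ a 0 + 2 * a 1 ∧ 3 ≤ 2 * a 0 + a 1} := by
  apply Subset.antisymm
  · apply convexHull_min
    · rintro a ((⟨h1, h2⟩ | ⟨h1, h2⟩) | ⟨h1, h2⟩) <;>
        exact ⟨by linarith, by linarith, by linarith, by linarith⟩
    · rintro p hp q hq s t hs ht hst
      simp only [mem_setOf_eq] at hp hq ⊢
      refine ⟨?_, ?_, ?_, ?_⟩ <;>
        simp only [Pi.add_apply, Pi.smul_apply, smul_eq_mul] <;>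
        nlinarith [hp.1, hp.2.1, hp.2.2.1, hp.2.2.2, hq.1, hq.2.1, hq.2.2.1, hq.2.2.2]
  · rintro a ⟨hx0, hy0, h1, h2⟩
    by_cases hx1 : a 0 < 1
    · have hden : (0:ℝ) < 1 - a 0 := by linarith
      have key : a ∈ segment ℝ ![0, (a 1 - a 0) / (1 - a 0)] ![1, 1] := by
        refine ⟨1 - a 0, a 0, by linarith, hx0, by ring, ?_⟩
        funext i
        fin_cases i <;>
          simp [Matrix.cons_val_zero, Matrix.cons_val_one, Matrix.head_cons] <;>
          field_simp <;> ring
      refine segment_subset_convexHull ?_ ?_ key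
      · refine Or.inr ⟨by norm_num, ?_⟩
        simp only [Matrix.cons_val_one, Matrix.head_cons, Matrix.cons_val_zero]
        rw [le_div_iff₀ hden]
        linarith
      · exact Or.inl (Or.inr ⟨by norm_num, by norm_num⟩)
    · by_cases hy1 : a 1 < 1
      · have hden : (0:ℝ) < 1 - a 1 := by linarith
        have key : a ∈ segment ℝ ![(a 0 - a 1) / (1 - a 1), 0] ![1, 1] := by
          refine ⟨1 - a 1, a 1, by linarith, hy0, by ring, ?_⟩
          funext i
          fin_cases i <;>
            simp [Matrix.cons_val_zero, Matrix.cons_val_one, Matrix.head_cons] <;>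
            field_simp <;> ring
        refine segment_subset_convexHull ?_ ?_ key
        · refine Or.inl (Or.inl ⟨?_, by norm_num⟩)
          simp only [Matrix.cons_val_zero]
          rw [le_div_iff₀ hden]
          linarith
        · exact Or.inl (Or.inr ⟨by norm_num, by norm_num⟩)
      · exact subset_convexHull ℝ _ (Or.inl (Or.inr ⟨not_lt.1 hx1, not_lt.1 hy1⟩))

theorem example_newton_region_integral (X₁ X₂ : ℝ) (h₁ : 0 < X₁) (h₂ : 0 < X₂)
    (N : Set (Fin 2 → ℝ))
    (hN : N = {a : Fin 2 → ℝ | 0 ≤ a 0 ∧ 0 ≤ a 1} \ convexHull ℝ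
      ({a : Fin 2 → ℝ | 3 ≤ a 0 ∧ 0 ≤ a 1} ∪ {a : Fin 2 → ℝ | 1 ≤ a 0 ∧ 1 ≤ a 1}
        ∪ {a : Fin 2 → ℝ | 0 ≤ a 0 ∧ 3 ≤ a 1})) :
    1 - ∫ a in N, ((Nat.factorial 2 : ℝ) * (X₁ * X₂)) / (1 + a 0 * X₁ + a 1 * X₂) ^ 3
    = 3 * X₂ / ((1 + 3 * X₁) * (1 + 3 * X₂)) + 1 / (1 + 3 * X₂)
      + 3 * X₁ * X₂ / ((1 + 3 * X₁) * (1 + X₁ + X₂) * (1 + 3 * X₂)) := by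
  have hNe : N = {a : Fin 2 → ℝ | 0 ≤ a 0 ∧ 0 ≤ a 1
      ∧ (a 0 + 2 * a 1 < 3 ∨ 2 * a 0 + a 1 < 3)} := by
    rw [hN, hull_eq']
    ext a
    simp only [mem_diff, mem_setOf_eq]
    constructor
    · rintro ⟨⟨h0, h1⟩, hn⟩
      push_neg at hn
      refine ⟨h0, h1, ?_⟩
      rcases lt_or_ge (a 0 + 2 * a 1) 3 with h | h
      · exact Or.inl h
      · exact Or.inr (hn h0 h1 h)
    · rintro ⟨h0, h1, hor⟩
      refine ⟨⟨h0, h1⟩, fun hc => ?_⟩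
      rcases hor with h | h
      · linarith [hc.2.2.1]
      · linarith [hc.2.2.2]
  -- transfer to ℝ × ℝ
  have hmp : MeasurePreserving (MeasurableEquiv.finTwoArrow (α := ℝ)).symm volume volume :=
    (volume_preserving_finTwoArrow ℝ).symm _
  rw [← hmp.setIntegral_preimage_emb (MeasurableEquiv.measurableEmbedding _)
    (fun a => ((Nat.factorial 2 : ℝ) * (X₁ * X₂)) / (1 + a 0 * X₁ + a 1 * X₂) ^ 3) N]
  have hset : (MeasurableEquiv.finTwoArrow (α := ℝ)).symm ⁻¹' N
      = {p : ℝ × ℝ | p.1 ∈ Ico 0 1 ∧ p.2 ∈ Ico 0 (3 + (-2) * p.1)}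
        ∪ {p : ℝ × ℝ | p.1 ∈ Ico 1 3 ∧ p.2 ∈ Ico 0 (3/2 + (-(1/2)) * p.1)} := by
    ext p
    simp only [mem_preimage, hNe, mem_setOf_eq, MeasurableEquiv.finTwoArrow_symm_apply,
      Fin.cons_zero, Fin.cons_one, Matrix.cons_val_zero, Matrix.cons_val_one,
      Matrix.head_cons, mem_union, mem_Ico]
    constructor
    · rintro ⟨h0, h1, hor⟩
      by_cases hlt : p.1 < 1
      · refine Or.inl ⟨⟨h0, hlt⟩, h1, ?_⟩
        rcases hor with h | h <;> linarith
      · push_neg at hlt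
        refine Or.inr ⟨⟨hlt, ?_⟩, h1, ?_⟩
        · rcases hor with h | h <;> linarith
        · rcases hor with h | h <;> linarith
    · rintro (⟨⟨ha, hb⟩, hc, hd⟩ | ⟨⟨ha, hb⟩, hc, hd⟩)
      · exact ⟨ha, hc, Or.inr (by linarith)⟩
      · exact ⟨by linarith, hc, Or.inl (by linarith)⟩
  rw [hset]
  have hint_eq : (fun p : ℝ × ℝ =>
      ((Nat.factorial 2 : ℝ) * (X₁ * X₂)) /
        (1 + (MeasurableEquiv.finTwoArrow (α := ℝ)).symm p 0 * X₁
          + (MeasurableEquiv.finTwoArrow (α := ℝ)).symm p 1 * X₂) ^ 3)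
      = fun p : ℝ × ℝ => 2 * X₁ * X₂ / (1 + p.1 * X₁ + p.2 * X₂) ^ 3 := by
    funext p
    simp only [MeasurableEquiv.finTwoArrow_symm_apply, Fin.cons_zero, Fin.cons_one,
      Matrix.cons_val_zero, Matrix.cons_val_one, Matrix.head_cons, Nat.factorial]
    norm_num
    ring
  rw [hint_eq]
  -- split the union
  have hdisj : Disjoint {p : ℝ × ℝ | p.1 ∈ Ico 0 1 ∧ p.2 ∈ Ico 0 (3 + (-2) * p.1)}
      {p : ℝ × ℝ | p.1 ∈ Ico 1 3 ∧ p.2 ∈ Ico 0 (3/2 + (-(1/2)) * p.1)} := by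
    rw [Set.disjoint_left]
    rintro p ⟨hp1, _⟩ ⟨hq1, _⟩
    exact absurd hq1.1 (not_le.2 hp1.2)
  rw [setIntegral_union hdisj (measurableT' (3/2) (-(1/2)) 1 3)
    (integrableOnT' X₁ X₂ 3 (-2) 0 1 h₁ h₂ le_rfl)
    (integrableOnT' X₁ X₂ (3/2) (-(1/2)) 1 3 h₁ h₂ (by norm_num))]
  rw [region_integral' X₁ X₂ 3 (-2) 0 1 h₁ h₂ (by norm_num) le_rfl
    (fun x hx => by simp only [mem_Ico] at hx; linarith [hx.2])]
  rw [region_integral' X₁ X₂ (3/2) (-(1/2)) 1 3 h₁ h₂ (by norm_num) (by norm_num)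
    (fun x hx => by simp only [mem_Ico] at hx; linarith [hx.2])]
  -- rewrite the second-denominator integrands into c + x * d form
  have hfun1 : (fun x : ℝ => X₁ / (1 + x * X₁) ^ 2
        - X₁ / (1 + x * X₁ + (3 + (-2) * x) * X₂) ^ 2)
      = fun x : ℝ => X₁ / (1 + x * X₁) ^ 2 - X₁ / ((1 + 3 * X₂) + x * (X₁ - 2 * X₂)) ^ 2 := by
    funext x
    have : 1 + x * X₁ + (3 + (-2) * x) * X₂ = (1 + 3 * X₂) + x * (X₁ - 2 * X₂) := by ring
    rw [this]
  have hfun2 : (fun x : ℝ => X₁ / (1 + x * X₁) ^ 2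
        - X₁ / (1 + x * X₁ + (3/2 + (-(1/2)) * x) * X₂) ^ 2)
      = fun x : ℝ => X₁ / (1 + x * X₁) ^ 2
        - X₁ / ((1 + 3/2 * X₂) + x * (X₁ - 1/2 * X₂)) ^ 2 := by
    funext x
    have : 1 + x * X₁ + (3/2 + (-(1/2)) * x) * X₂ = (1 + 3/2 * X₂) + x * (X₁ - 1/2 * X₂) := by
      ring
    rw [this]
  rw [hfun1, hfun2]
  -- also rewrite 1 + x * X₁ as c + x * d with c = 1, d = X₁ (it is syntactically so)
  have hposA1 : ∀ x ∈ Set.Icc (0:ℝ) 1, 0 < 1 + x * X₁ := fun x hx => by nlinarith [hx.1]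
  have hposB1 : ∀ x ∈ Set.Icc (0:ℝ) 1, 0 < (1 + 3 * X₂) + x * (X₁ - 2 * X₂) := fun x hx => by
    nlinarith [hx.1, hx.2]
  have hposA2 : ∀ x ∈ Set.Icc (1:ℝ) 3, 0 < 1 + x * X₁ := fun x hx => by nlinarith [hx.1]
  have hposB2 : ∀ x ∈ Set.Icc (1:ℝ) 3, 0 < (1 + 3/2 * X₂) + x * (X₁ - 1/2 * X₂) := fun x hx => by
    nlinarith [hx.1, hx.2]
  rw [intervalIntegral.integral_sub (intInt_pow2' X₁ 1 X₁ 0 1 (by norm_num) hposA1)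
    (intInt_pow2' X₁ (1 + 3 * X₂) (X₁ - 2 * X₂) 0 1 (by norm_num) hposB1)]
  rw [intervalIntegral.integral_sub (intInt_pow2' X₁ 1 X₁ 1 3 (by norm_num) hposA2)
    (intInt_pow2' X₁ (1 + 3/2 * X₂) (X₁ - 1/2 * X₂) 1 3 (by norm_num) hposB2)]
  rw [ftc_pow2' X₁ 1 X₁ 0 1 (by norm_num) hposA1,
    ftc_pow2' X₁ (1 + 3 * X₂) (X₁ - 2 * X₂) 0 1 (by norm_num) hposB1,
    ftc_pow2' X₁ 1 X₁ 1 3 (by norm_num) hposA2,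
    ftc_pow2' X₁ (1 + 3/2 * X₂) (X₁ - 1/2 * X₂) 1 3 (by norm_num) hposB2]
  have d1 : (0:ℝ) < 1 + X₁ := by linarith
  have d2 : (0:ℝ) < 1 + 3 * X₁ := by linarith
  have d3 : (0:ℝ) < 1 + 3 * X₂ := by linarith
  have d4 : (0:ℝ) < 1 + X₁ + X₂ := by linarith
  have e1 : (1:ℝ) + 0 * X₁ = 1 := by ring
  have e2 : (1:ℝ) + 1 * X₁ = 1 + X₁ := by ring
  have e3 : (1 + 3 * X₂) + 0 * (X₁ - 2 * X₂) = 1 + 3 * X₂ := by ring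
  have e4 : (1 + 3 * X₂) + 1 * (X₁ - 2 * X₂) = 1 + X₁ + X₂ := by ring
  have e5 : (1:ℝ) + 3 * X₁ = 1 + 3 * X₁ := rfl
  have e6 : (1 + 3/2 * X₂) + 1 * (X₁ - 1/2 * X₂) = 1 + X₁ + X₂ := by ring
  have e7 : (1 + 3/2 * X₂) + 3 * (X₁ - 1/2 * X₂) = 1 + 3 * X₁ := by ring
  rw [e1, e2, e3, e4, e6, e7]
  have e8 : (1:ℝ) + 3 * X₁ ≠ 0 := d2.ne'
  field_simp
  ring
end

section
/- In $\mathbb{R}^3$ with coordinates $(a_0,a_1,a_2)$, let $\hat{\underline v}_0 = (3,3,0)$, $\hat{\underline v}_1 = (2,1,1)$, $\hat{\underline v}_2 = (3,0,3)$ be the lifts to the plane $H: a_0 = a_1+a_2$ of $\underline v_0=(3,0)$, $\underline v_1=(1,1)$, $\underline v_2=(0,3)$. Then the five simplices with vertex sets (finite vertices listed, infinite vertices as coordinate directions) $\{\hat{\underline v}_0,\hat{\underline v}_1,\hat{\underline v}_2; e_1\}$, $\{\hat{\underline v}_1,\hat{\underline v}_2; e_1,e_2\}$, $\{\hat{\underline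 v}_0,\hat{\underline v}_1,\hat{\underline v}_2; e_0\}$, $\{\hat{\underline v}_0,\hat{\underline v}_2; e_1,e_0\}$, $\{\hat{\underline v}_2; e_1,e_2,e_0\}$ have pairwise disjoint interiors and their union is the region $\hat N' = \mathrm{conv}(\{\hat{\underline v}_0,\hat{\underline v}_1,\hat{\underline v}_2\}) + \mathbb{R}^3_{\geq 0}$. -/
open Pointwise

/-- The simplex with finite vertices `fv` and infinite vertices in the
directions `dirs`. -/
def simplexWithDirections {k m : ℕ} (fv : Fin k → Fin 3 → ℝ)
    (dirs : Fin m → Fin 3 → ℝ) : Set (Fin 3 → ℝ) :=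
  {a | ∃ (l : Fin k → ℝ) (μ : Fin m → ℝ),
    (∀ i, 0 ≤ l i) ∧ (∀ j, 0 ≤ μ j) ∧ ∑ i, l i = 1 ∧
    a = (∑ i, l i • fv i) + ∑ j, μ j • dirs j}

namespace NhatAux

noncomputable abbrev T0 : Set (Fin 3 → ℝ) :=
  simplexWithDirections ![![3,3,0], ![2,1,1], ![3,0,3]] ![![0,1,0]]
noncomputable abbrev T1 : Set (Fin 3 → ℝ) :=
  simplexWithDirections ![![2,1,1], ![3,0,3]] ![![0,1,0], ![0,0,1]]
noncomputable abbrev T2 : Set (Fin 3 → ℝ) :=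
  simplexWithDirections ![![3,3,0], ![2,1,1], ![3,0,3]] ![![1,0,0]]
noncomputable abbrev T3 : Set (Fin 3 → ℝ) :=
  simplexWithDirections ![![3,3,0], ![3,0,3]] ![![0,1,0], ![1,0,0]]
noncomputable abbrev T4 : Set (Fin 3 → ℝ) :=
  simplexWithDirections ![![3,0,3]] ![![0,1,0], ![0,0,1], ![1,0,0]]

noncomputable abbrev RHS : Set (Fin 3 → ℝ) :=
  convexHull ℝ {(![3,3,0] : Fin 3 → ℝ), ![2,1,1], ![3,0,3]}
      + {a : Fin 3 → ℝ | ∀ i, 0 ≤ a i}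

/-! ### Bound lemmas: each simplex lies in suitable halfspaces -/

lemma B0 {a : Fin 3 → ℝ} (h : a ∈ T0) :
    3 ≤ 2 * a 0 - a 2 ∧ a 0 ≤ a 1 + a 2 ∧ a 0 ≤ 3 := by
  obtain ⟨l, μ, hl, hμ, hsum, heq⟩ := h
  have h0 := congrFun heq 0
  have h1 := congrFun heq 1
  have h2 := congrFun heq 2
  simp [Fin.sum_univ_three, Fin.sum_univ_one] at h0 h1 h2 hsum
  have := hl 0; have := hl 1; have := hl 2; have := hμ 0
  exact ⟨by linarith, by linarith, by linarith⟩

lemma B1 {a : Fin 3 → ℝ} (h : a ∈ T1) :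
    2 * a 0 - a 2 ≤ 3 ∧ a 0 ≤ 3 := by
  obtain ⟨l, μ, hl, hμ, hsum, heq⟩ := h
  have h0 := congrFun heq 0
  have h1 := congrFun heq 1
  have h2 := congrFun heq 2
  simp [Fin.sum_univ_two] at h0 h1 h2 hsum
  have := hl 0; have := hl 1; have := hμ 0; have := hμ 1
  exact ⟨by linarith, by linarith⟩

lemma B2 {a : Fin 3 → ℝ} (h : a ∈ T2) :
    a 1 + a 2 ≤ a 0 ∧ 3 ≤ 2 * a 0 - a 2 ∧ a 1 + a 2 ≤ 3 := by
  obtain ⟨l, μ, hl, hμ, hsum, heq⟩ := h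
  have h0 := congrFun heq 0
  have h1 := congrFun heq 1
  have h2 := congrFun heq 2
  simp [Fin.sum_univ_three, Fin.sum_univ_one] at h0 h1 h2 hsum
  have := hl 0; have := hl 1; have := hl 2; have := hμ 0
  exact ⟨by linarith, by linarith, by linarith⟩

lemma B3 {a : Fin 3 → ℝ} (h : a ∈ T3) :
    3 ≤ a 0 ∧ 3 ≤ a 1 + a 2 ∧ a 2 ≤ 3 := by
  obtain ⟨l, μ, hl, hμ, hsum, heq⟩ := h
  have h0 := congrFun heq 0
  have h1 := congrFun heq 1
  have h2 := congrFun heq 2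
  simp [Fin.sum_univ_two] at h0 h1 h2 hsum
  have := hl 0; have := hl 1; have := hμ 0; have := hμ 1
  exact ⟨by linarith, by linarith, by linarith⟩

lemma B4 {a : Fin 3 → ℝ} (h : a ∈ T4) :
    3 ≤ a 0 ∧ 3 ≤ a 1 + a 2 ∧ 3 ≤ a 2 := by
  obtain ⟨l, μ, hl, hμ, hsum, heq⟩ := h
  have h0 := congrFun heq 0
  have h1 := congrFun heq 1
  have h2 := congrFun heq 2
  simp [Fin.sum_univ_three, Fin.sum_univ_one] at h0 h1 h2 hsum
  have := hl 0; have := hμ 0; have := hμ 1; have := hμ 2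
  exact ⟨by linarith, by linarith, by linarith⟩

/-! ### Membership constructors from halfspace descriptions -/

lemma M0 {a : Fin 3 → ℝ} (h1 : a 0 ≤ a 1 + a 2) (h2 : a 0 ≤ 3) (h3 : 3 ≤ a 0 + a 2)
    (h4 : 3 ≤ 2 * a 0 - a 2) : a ∈ T0 := by
  refine ⟨![(2*a 0 - a 2 - 3)/3, 3 - a 0, (a 0 + a 2 - 3)/3], ![a 1 - a 0 + a 2],
    ?_, ?_, ?_, ?_⟩
  · intro i; fin_cases i <;> simp <;> try linarith
  · intro j; fin_cases j; simpa using by linarith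
  · simp [Fin.sum_univ_three]; try ring
  · funext i; fin_cases i <;> simp [Fin.sum_univ_three, Fin.sum_univ_one] <;> try ring

lemma M1 {a : Fin 3 → ℝ} (h1 : 2 ≤ a 0) (h2 : a 0 ≤ 3) (h3 : 3 ≤ a 0 + a 1)
    (h4 : 2 * a 0 - a 2 ≤ 3) : a ∈ T1 := by
  refine ⟨![3 - a 0, a 0 - 2], ![a 1 - 3 + a 0, a 2 + 3 - 2*a 0], ?_, ?_, ?_, ?_⟩
  · intro i; fin_cases i <;> simp <;> try linarith
  · intro j; fin_cases j <;> simp <;> try linarith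
  · simp [Fin.sum_univ_two]; try ring
  · funext i; fin_cases i <;> simp [Fin.sum_univ_two] <;> try ring

lemma M2 {a : Fin 3 → ℝ} (h1 : a 1 + a 2 ≤ a 0) (h2 : a 1 + a 2 ≤ 3)
    (h3 : 3 ≤ 2*a 1 + a 2) (h4 : 3 ≤ a 1 + 2*a 2) : a ∈ T2 := by
  refine ⟨![(2*a 1 + a 2 - 3)/3, 3 - a 1 - a 2, (a 1 + 2*a 2 - 3)/3],
    ![a 0 - a 1 - a 2], ?_, ?_, ?_, ?_⟩
  · intro i; fin_cases i <;> simp <;> try linarith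
  · intro j; fin_cases j; simpa using by linarith
  · simp [Fin.sum_univ_three]; try ring
  · funext i; fin_cases i <;> simp [Fin.sum_univ_three, Fin.sum_univ_one] <;> try ring

lemma M3 {a : Fin 3 → ℝ} (h1 : 3 ≤ a 0) (h2 : 3 ≤ a 1 + a 2) (h3 : 0 ≤ a 2)
    (h4 : a 2 ≤ 3) : a ∈ T3 := by
  refine ⟨![1 - a 2/3, a 2/3], ![a 1 - 3 + a 2, a 0 - 3], ?_, ?_, ?_, ?_⟩
  · intro i; fin_cases i <;> simp <;> try linarith
  · intro j; fin_cases j <;> simp <;> try linarith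
  · simp [Fin.sum_univ_two]; try ring
  · funext i; fin_cases i <;> simp [Fin.sum_univ_two] <;> try ring

lemma M4 {a : Fin 3 → ℝ} (h1 : 3 ≤ a 0) (h2 : 0 ≤ a 1) (h3 : 3 ≤ a 2) : a ∈ T4 := by
  refine ⟨![1], ![a 1, a 2 - 3, a 0 - 3], ?_, ?_, ?_, ?_⟩
  · intro i; fin_cases i; simp
  · intro j; fin_cases j <;> simp <;> try linarith
  · simp
  · funext i; fin_cases i <;> simp [Fin.sum_univ_three, Fin.sum_univ_one] <;> try ring

/-! ### Membership in the right-hand side -/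

lemma mem_hull3 (v0 v1 v2 : Fin 3 → ℝ) (l0 l1 l2 : ℝ) (h0 : 0 ≤ l0) (h1 : 0 ≤ l1)
    (h2 : 0 ≤ l2) (hs : l0 + l1 + l2 = 1) :
    l0 • v0 + l1 • v1 + l2 • v2 ∈ convexHull ℝ ({v0, v1, v2} : Set (Fin 3 → ℝ)) := by
  have h := (convex_convexHull ℝ ({v0, v1, v2} : Set (Fin 3 → ℝ))).sum_mem
    (t := Finset.univ) (w := ![l0, l1, l2]) (z := ![v0, v1, v2])
    (fun i _ => by fin_cases i <;> simpa)
    (by simp [Fin.sum_univ_three]; linarith)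
    (fun i _ => by fin_cases i <;> exact subset_convexHull ℝ _ (by simp))
  simpa [Fin.sum_univ_three, add_assoc] using h

lemma mem_RHS {a : Fin 3 → ℝ} (l0 l1 l2 : ℝ) (h0 : 0 ≤ l0) (h1 : 0 ≤ l1) (h2 : 0 ≤ l2)
    (hs : l0 + l1 + l2 = 1)
    (q0 : 3*l0 + 2*l1 + 3*l2 ≤ a 0) (q1 : 3*l0 + l1 ≤ a 1) (q2 : l1 + 3*l2 ≤ a 2) :
    a ∈ RHS := by
  set c : Fin 3 → ℝ := l0 • ![3,3,0] + l1 • ![2,1,1] + l2 • ![3,0,3] with hc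
  have hcm : c ∈ convexHull ℝ {(![3,3,0] : Fin 3 → ℝ), ![2,1,1], ![3,0,3]} :=
    mem_hull3 _ _ _ _ _ _ h0 h1 h2 hs
  have hpm : (a - c) ∈ {a : Fin 3 → ℝ | ∀ i, 0 ≤ a i} := by
    intro i; fin_cases i <;> simp [hc] <;> linarith
  have : c + (a - c) ∈ RHS := Set.add_mem_add hcm hpm
  simpa using this

/-! ### Each simplex is contained in the RHS -/

lemma T0_sub : T0 ⊆ RHS := by
  rintro a ⟨l, μ, hl, hμ, hsum, heq⟩
  have h0 := congrFun heq 0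
  have h1 := congrFun heq 1
  have h2 := congrFun heq 2
  simp [Fin.sum_univ_three, Fin.sum_univ_one] at h0 h1 h2 hsum
  exact mem_RHS (l 0) (l 1) (l 2) (hl 0) (hl 1) (hl 2) (by linarith)
    (by linarith) (by have := hμ 0; linarith) (by linarith)

lemma T1_sub : T1 ⊆ RHS := by
  rintro a ⟨l, μ, hl, hμ, hsum, heq⟩
  have h0 := congrFun heq 0
  have h1 := congrFun heq 1
  have h2 := congrFun heq 2
  simp [Fin.sum_univ_two] at h0 h1 h2 hsum
  exact mem_RHS 0 (l 0) (l 1) le_rfl (hl 0) (hl 1) (by linarith)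
    (by linarith) (by have := hμ 0; linarith) (by have := hμ 1; linarith)

lemma T2_sub : T2 ⊆ RHS := by
  rintro a ⟨l, μ, hl, hμ, hsum, heq⟩
  have h0 := congrFun heq 0
  have h1 := congrFun heq 1
  have h2 := congrFun heq 2
  simp [Fin.sum_univ_three, Fin.sum_univ_one] at h0 h1 h2 hsum
  exact mem_RHS (l 0) (l 1) (l 2) (hl 0) (hl 1) (hl 2) (by linarith)
    (by have := hμ 0; linarith) (by linarith) (by linarith)

lemma T3_sub : T3 ⊆ RHS := by
  rintro a ⟨l, μ, hl, hμ, hsum, heq⟩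
  have h0 := congrFun heq 0
  have h1 := congrFun heq 1
  have h2 := congrFun heq 2
  simp [Fin.sum_univ_two] at h0 h1 h2 hsum
  exact mem_RHS (l 0) 0 (l 1) (hl 0) le_rfl (hl 1) (by linarith)
    (by have := hμ 1; linarith) (by have := hμ 0; linarith) (by linarith)

lemma T4_sub : T4 ⊆ RHS := by
  rintro a ⟨l, μ, hl, hμ, hsum, heq⟩
  have h0 := congrFun heq 0
  have h1 := congrFun heq 1
  have h2 := congrFun heq 2
  simp [Fin.sum_univ_three, Fin.sum_univ_one] at h0 h1 h2 hsum
  exact mem_RHS 0 0 1 le_rfl le_rfl zero_le_one (by ring)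
    (by have := hμ 2; linarith) (by have := hμ 0; linarith) (by have := hμ 1; linarith)

/-! ### Separation lemma for disjoint interiors -/

lemma sep_interior {s t : Set (Fin 3 → ℝ)} (w u : Fin 3 → ℝ) (c : ℝ)
    (hu : 0 < ∑ i, w i * u i)
    (hs : ∀ x ∈ s, ∑ i, w i * x i ≤ c) (ht : ∀ x ∈ t, c ≤ ∑ i, w i * x i) :
    interior s ∩ interior t = ∅ := by
  by_contra h
  obtain ⟨x, hxs, hxt⟩ := Set.nonempty_iff_ne_empty.2 h
  have hfx : ∑ i, w i * x i = c :=
    le_antisymm (hs x (interior_subset hxs)) (ht x (interior_subset hxt))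
  have hcont : Filter.Tendsto (fun δ : ℝ => x - δ • u) (nhds 0) (nhds x) := by
    have hC : Continuous fun δ : ℝ => x - δ • u := by continuity
    have := hC.tendsto 0
    simpa using this
  have hmem : t ∈ nhds x := mem_interior_iff_mem_nhds.mp hxt
  have hev : ∀ᶠ δ in nhds (0:ℝ), x - δ • u ∈ t := hcont.eventually hmem
  have hev' : ∀ᶠ δ in nhdsWithin (0:ℝ) (Set.Ioi 0), x - δ • u ∈ t :=
    hev.filter_mono nhdsWithin_le_nhds
  obtain ⟨δ, hδt, hδpos⟩ := (hev'.and self_mem_nhdsWithin).exists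
  have hle := ht _ hδt
  have hsum : ∑ i, w i * (x - δ • u) i = (∑ i, w i * x i) - δ * ∑ i, w i * u i := by
    simp [Fin.sum_univ_three]; try ring
  rw [hsum, hfx] at hle
  have : 0 < δ * ∑ i, w i * u i := mul_pos hδpos hu
  linarith

end NhatAux

open NhatAux in
theorem example_triangulation_of_Nhat' (S : Fin 5 → Set (Fin 3 → ℝ))
    (hS : S = ![
      simplexWithDirections ![![3,3,0], ![2,1,1], ![3,0,3]] ![![0,1,0]],
      simplexWithDirections ![![2,1,1], ![3,0,3]] ![![0,1,0], ![0,0,1]],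
      simplexWithDirections ![![3,3,0], ![2,1,1], ![3,0,3]] ![![1,0,0]],
      simplexWithDirections ![![3,3,0], ![3,0,3]] ![![0,1,0], ![1,0,0]],
      simplexWithDirections ![![3,0,3]] ![![0,1,0], ![0,0,1], ![1,0,0]]]) :
    (∀ i j, i ≠ j → interior (S i) ∩ interior (S j) = ∅) ∧
    (⋃ i, S i) = convexHull ℝ {(![3,3,0] : Fin 3 → ℝ), ![2,1,1], ![3,0,3]}
      + {a : Fin 3 → ℝ | ∀ i, 0 ≤ a i} := by
  subst hS
  constructor
  · -- disjoint interiors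
    intro i j hij
    have sep01 : interior T1 ∩ interior T0 = ∅ :=
      sep_interior ![2,0,-1] ![1,0,0] 3 (by norm_num [Fin.sum_univ_three, Matrix.cons_val_two, Matrix.tail_cons, Matrix.head_cons])
        (fun x hx => by have := (B1 hx).1; simp [Fin.sum_univ_three]; linarith)
        (fun x hx => by have := (B0 hx).1; simp [Fin.sum_univ_three]; linarith)
    have sep02 : interior T0 ∩ interior T2 = ∅ :=
      sep_interior ![1,-1,-1] ![1,0,0] 0 (by norm_num [Fin.sum_univ_three, Matrix.cons_val_two, Matrix.tail_cons, Matrix.head_cons])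
        (fun x hx => by have := (B0 hx).2.1; simp [Fin.sum_univ_three]; linarith)
        (fun x hx => by have := (B2 hx).1; simp [Fin.sum_univ_three]; linarith)
    have sep03 : interior T0 ∩ interior T3 = ∅ :=
      sep_interior ![1,0,0] ![1,0,0] 3 (by norm_num [Fin.sum_univ_three, Matrix.cons_val_two, Matrix.tail_cons, Matrix.head_cons])
        (fun x hx => by have := (B0 hx).2.2; simp [Fin.sum_univ_three]; linarith)
        (fun x hx => by have := (B3 hx).1; simp [Fin.sum_univ_three]; linarith)
    have sep04 : interior T0 ∩ interior T4 = ∅ :=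
      sep_interior ![1,0,0] ![1,0,0] 3 (by norm_num [Fin.sum_univ_three, Matrix.cons_val_two, Matrix.tail_cons, Matrix.head_cons])
        (fun x hx => by have := (B0 hx).2.2; simp [Fin.sum_univ_three]; linarith)
        (fun x hx => by have := (B4 hx).1; simp [Fin.sum_univ_three]; linarith)
    have sep12 : interior T1 ∩ interior T2 = ∅ :=
      sep_interior ![2,0,-1] ![1,0,0] 3 (by norm_num [Fin.sum_univ_three, Matrix.cons_val_two, Matrix.tail_cons, Matrix.head_cons])
        (fun x hx => by have := (B1 hx).1; simp [Fin.sum_univ_three]; linarith)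
        (fun x hx => by have := (B2 hx).2.1; simp [Fin.sum_univ_three]; linarith)
    have sep13 : interior T1 ∩ interior T3 = ∅ :=
      sep_interior ![1,0,0] ![1,0,0] 3 (by norm_num [Fin.sum_univ_three, Matrix.cons_val_two, Matrix.tail_cons, Matrix.head_cons])
        (fun x hx => by have := (B1 hx).2; simp [Fin.sum_univ_three]; linarith)
        (fun x hx => by have := (B3 hx).1; simp [Fin.sum_univ_three]; linarith)
    have sep14 : interior T1 ∩ interior T4 = ∅ :=
      sep_interior ![1,0,0] ![1,0,0] 3 (by norm_num [Fin.sum_univ_three, Matrix.cons_val_two, Matrix.tail_cons, Matrix.head_cons])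
        (fun x hx => by have := (B1 hx).2; simp [Fin.sum_univ_three]; linarith)
        (fun x hx => by have := (B4 hx).1; simp [Fin.sum_univ_three]; linarith)
    have sep23 : interior T2 ∩ interior T3 = ∅ :=
      sep_interior ![0,1,1] ![0,1,0] 3 (by norm_num [Fin.sum_univ_three, Matrix.cons_val_two, Matrix.tail_cons, Matrix.head_cons])
        (fun x hx => by have := (B2 hx).2.2; simp [Fin.sum_univ_three]; linarith)
        (fun x hx => by have := (B3 hx).2.1; simp [Fin.sum_univ_three]; linarith)
    have sep24 : interior T2 ∩ interior T4 = ∅ :=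
      sep_interior ![0,1,1] ![0,1,0] 3 (by norm_num [Fin.sum_univ_three, Matrix.cons_val_two, Matrix.tail_cons, Matrix.head_cons])
        (fun x hx => by have := (B2 hx).2.2; simp [Fin.sum_univ_three]; linarith)
        (fun x hx => by have := (B4 hx).2.1; simp [Fin.sum_univ_three]; linarith)
    have sep34 : interior T3 ∩ interior T4 = ∅ :=
      sep_interior ![0,0,1] ![0,0,1] 3 (by norm_num [Fin.sum_univ_three, Matrix.cons_val_two, Matrix.tail_cons, Matrix.head_cons])
        (fun x hx => by have := (B3 hx).2.2; simp [Fin.sum_univ_three]; linarith)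
        (fun x hx => by have := (B4 hx).2.2; simp [Fin.sum_univ_three]; linarith)
    have comm : ∀ s t : Set (Fin 3 → ℝ), interior s ∩ interior t = ∅ →
        interior t ∩ interior s = ∅ := fun s t h => by rw [Set.inter_comm]; exact h
    fin_cases i <;> fin_cases j <;> simp only [Matrix.cons_val_zero, Matrix.cons_val_one,
      Matrix.head_cons, Matrix.cons_val_two, Matrix.tail_cons, Matrix.cons_val_three,
      Matrix.cons_val_four] at hij ⊢
    · exact absurd rfl hij
    · exact comm _ _ sep01
    · exact sep02
    · exact sep03
    · exact sep04
    · exact sep01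
    · exact absurd rfl hij
    · exact sep12
    · exact sep13
    · exact sep14
    · exact comm _ _ sep02
    · exact comm _ _ sep12
    · exact absurd rfl hij
    · exact sep23
    · exact sep24
    · exact comm _ _ sep03
    · exact comm _ _ sep13
    · exact comm _ _ sep23
    · exact absurd rfl hij
    · exact sep34
    · exact comm _ _ sep04
    · exact comm _ _ sep14
    · exact comm _ _ sep24
    · exact comm _ _ sep34
    · exact absurd rfl hij
  · -- union equals RHS
    apply Set.Subset.antisymm
    · apply Set.iUnion_subset
      intro i
      fin_cases i
      · exact T0_sub
      · exact T1_sub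
      · exact T2_sub
      · exact T3_sub
      · exact T4_sub
    · rintro x ⟨c, hc, p, hp, rfl⟩
      -- extract convex coefficients for c
      rw [convexHull_insert ⟨_, Set.mem_insert _ _⟩] at hc
      obtain ⟨z, hz, hcz⟩ := Set.mem_iUnion₂.mp hc
      rw [Set.mem_singleton_iff] at hz
      subst hz
      obtain ⟨y, hy, hcy⟩ := Set.mem_iUnion₂.mp hcz
      rw [convexHull_pair] at hy
      obtain ⟨σ, τ, hσ, hτ, hστ, rfl⟩ := hy
      obtain ⟨θ, η, hθ, hη, hθη, rfl⟩ := hcy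
      set a : Fin 3 → ℝ := θ • ![3,3,0] + η • (σ • ![2,1,1] + τ • ![3,0,3]) + p with ha
      have hp0 := hp 0
      have hp1 := hp 1
      have hp2 := hp 2
      have E0 : a 0 = 3*θ + 2*(η*σ) + 3*(η*τ) + p 0 := by simp [ha, Matrix.vecHead, Matrix.vecTail]; try ring
      have E1 : a 1 = 3*θ + (η*σ) + p 1 := by simp [ha, Matrix.vecHead, Matrix.vecTail]; try ring
      have E2 : a 2 = (η*σ) + 3*(η*τ) + p 2 := by simp [ha, Matrix.vecHead, Matrix.vecTail]; try ring
      have hsum : θ + η*σ + η*τ = 1 := by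
        have : η * (σ + τ) = η * 1 := by rw [hστ]
        nlinarith
      have hL1 : 0 ≤ η*σ := mul_nonneg hη hσ
      have hL2 : 0 ≤ η*τ := mul_nonneg hη hτ
      -- the seven defining inequalities of N̂'
      have n1 : 2 ≤ a 0 := by linarith
      have n2 : 0 ≤ a 1 := by linarith
      have n3 : 0 ≤ a 2 := by linarith
      have n4 : 3 ≤ a 1 + 2*a 2 := by linarith
      have n5 : 3 ≤ a 0 + a 2 := by linarith
      have n6 : 3 ≤ 2*a 1 + a 2 := by linarith
      have n7 : 3 ≤ a 0 + a 1 := by linarith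
      clear E0 E1 E2 hsum hp0 hp1 hp2 hL1 hL2
      beta_reduce
      rw [← ha]
      rcases le_total (a 0) 3 with hle3 | hge3
      · rcases le_total (2 * a 0 - a 2) 3 with h1 | h1
        · exact Set.mem_iUnion.2 ⟨1, M1 n1 hle3 n7 h1⟩
        · rcases le_total (a 0) (a 1 + a 2) with h2 | h2
          · exact Set.mem_iUnion.2 ⟨0, M0 h2 hle3 n5 h1⟩
          · exact Set.mem_iUnion.2 ⟨2, M2 h2 (by linarith) n6 n4⟩
      · rcases le_total 3 (a 2) with h1 | h1
        · exact Set.mem_iUnion.2 ⟨4, M4 hge3 n2 h1⟩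
        · rcases le_total 3 (a 1 + a 2) with h2 | h2
          · exact Set.mem_iUnion.2 ⟨3, M3 hge3 h2 n3 h1⟩
          · exact Set.mem_iUnion.2 ⟨2, M2 (by linarith) h2 n6 n4⟩
end
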